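/- Let {η_t} be irreducible positive recurrent and reversible with respect to μ, with M = λμ finite. For disjoint A, B ⊆ E, define the probability ν_{AB}(η) = M(η)P_η[T_B⁺ < T_A⁺]/Cap(A,B) on A. Then for every μ-integrable g : E → ℝ, E_{ν_{AB}}[ ∫_0^{T_B} g(η_t) dt ] = ⟨g, f_{AB}⟩_μ / Cap(A,B), where f_{AB}(η) = P_η[T_A < T_B]. -/

import Mathlib

open MeasureTheory
open scoped ENNReal
open scoped Classical

/-- Hitting time (first `n ≥ 0` with `ω n ∈ A`) of a discrete-time path. -/
noncomputable def hitT {E : Type*} (A : Set E) (ω : ℕ → E) : ℕ∞ :=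
  ⨅ (n : ℕ) (_ : ω n ∈ A), (n : ℕ∞)

/-- Return time (first `n > 0` with `ω n ∈ A`) of a discrete-time path. -/
noncomputable def retT {E : Type*} (A : Set E) (ω : ℕ → E) : ℕ∞ :=
  ⨅ (n : ℕ) (_ : 0 < n ∧ ω n ∈ A), (n : ℕ∞)

set_option linter.unusedSectionVars false
set_option linter.unusedVariables false
set_option maxHeartbeats 1000000

namespace S11

variable {E : Type*}

lemma hitT_le_of_mem {A : Set E} {ω : ℕ → E} {n : ℕ} (h : ω n ∈ A) :
    hitT A ω ≤ (n : ℕ∞) := by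
  exact iInf₂_le n h

lemma lt_hitT_iff {A : Set E} {ω : ℕ → E} {n : ℕ} :
    (n : ℕ∞) < hitT A ω ↔ ∀ m ≤ n, ω m ∉ A := by
  constructor
  · intro h m hm hmem
    exact absurd h (not_lt.mpr ((hitT_le_of_mem hmem).trans (Nat.cast_le.mpr hm)))
  · intro h
    have h1 : (((n + 1 : ℕ)) : ℕ∞) ≤ hitT A ω := by
      refine le_iInf₂ fun m hm => ?_
      have : n < m := by
        by_contra hc
        exact h m (not_lt.mp hc) hm
      exact_mod_cast Nat.succ_le_of_lt this
    exact lt_of_lt_of_le (Nat.cast_lt.mpr (Nat.lt_succ_self n)) h1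

lemma hitT_le_iff {A : Set E} {ω : ℕ → E} {n : ℕ} :
    hitT A ω ≤ (n : ℕ∞) ↔ ∃ m ≤ n, ω m ∈ A := by
  constructor
  · intro h
    by_contra hc
    push_neg at hc
    exact absurd h (not_le.mpr (lt_hitT_iff.mpr hc))
  · rintro ⟨m, hm, hmem⟩
    exact (hitT_le_of_mem hmem).trans (by exact_mod_cast hm)

lemma retT_le_of_mem {A : Set E} {ω : ℕ → E} {n : ℕ} (h0 : 0 < n) (h : ω n ∈ A) :
    retT A ω ≤ (n : ℕ∞) := by
  exact iInf₂_le n ⟨h0, h⟩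

lemma lt_retT_iff {A : Set E} {ω : ℕ → E} {n : ℕ} :
    (n : ℕ∞) < retT A ω ↔ ∀ m, 0 < m → m ≤ n → ω m ∉ A := by
  constructor
  · intro h m hm0 hm hmem
    exact absurd h (not_lt.mpr ((retT_le_of_mem hm0 hmem).trans (Nat.cast_le.mpr hm)))
  · intro h
    have h1 : (((n + 1 : ℕ)) : ℕ∞) ≤ retT A ω := by
      refine le_iInf₂ fun m hm => ?_
      have : n < m := by
        by_contra hc
        exact h m hm.1 (not_lt.mp hc) hm.2
      exact_mod_cast Nat.succ_le_of_lt this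
    exact lt_of_lt_of_le (Nat.cast_lt.mpr (Nat.lt_succ_self n)) h1

lemma retT_le_iff {A : Set E} {ω : ℕ → E} {n : ℕ} :
    retT A ω ≤ (n : ℕ∞) ↔ ∃ m, 0 < m ∧ m ≤ n ∧ ω m ∈ A := by
  constructor
  · intro h
    by_contra hc
    push_neg at hc
    refine absurd h (not_le.mpr (lt_retT_iff.mpr ?_))
    intro m hm0 hmn hmem
    exact absurd hmem (hc m hm0 hmn)
  · rintro ⟨m, hm0, hm, hmem⟩
    exact (retT_le_of_mem hm0 hmem).trans (by exact_mod_cast hm)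

lemma hitlt_eq (A B : Set E) :
    {ω : ℕ → E | hitT A ω < hitT B ω}
      = ⋃ n : ℕ, {ω : ℕ → E | ω n ∈ A ∧ ∀ m ≤ n, ω m ∉ B} := by
  ext ω
  simp only [Set.mem_setOf_eq, Set.mem_iUnion]
  constructor
  · intro h
    obtain ⟨n, hn, hlt⟩ := WithTop.lt_iff_exists_coe.mp h
    obtain ⟨m, hm, hmem⟩ := hitT_le_iff.mp hn.le
    refine ⟨m, hmem, fun k hk => ?_⟩
    have hmlt : (m : ℕ∞) < hitT B ω := lt_of_le_of_lt (Nat.cast_le.mpr hm) hlt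
    exact lt_hitT_iff.mp hmlt k hk
  · rintro ⟨n, hmem, hno⟩
    exact lt_of_le_of_lt (hitT_le_of_mem hmem) (lt_hitT_iff.mpr hno)

lemma retlt_eq (A B : Set E) :
    {ω : ℕ → E | retT B ω < retT A ω}
      = ⋃ n : ℕ, {ω : ℕ → E | 0 < n ∧ ω n ∈ B ∧ ∀ m, 0 < m → m ≤ n → ω m ∉ A} := by
  ext ω
  simp only [Set.mem_setOf_eq, Set.mem_iUnion]
  constructor
  · intro h
    obtain ⟨n, hn, hlt⟩ := WithTop.lt_iff_exists_coe.mp h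
    obtain ⟨m, hm0, hm, hmem⟩ := retT_le_iff.mp hn.le
    refine ⟨m, hm0, hmem, fun k hk0 hk => ?_⟩
    have hmlt : (m : ℕ∞) < retT A ω := lt_of_le_of_lt (Nat.cast_le.mpr hm) hlt
    exact lt_retT_iff.mp hmlt k hk0 hk
  · rintro ⟨n, hn0, hmem, hno⟩
    exact lt_of_le_of_lt (retT_le_of_mem hn0 hmem) (lt_retT_iff.mpr hno)

variable [Countable E] [MeasurableSpace E] [MeasurableSingletonClass E]

lemma measSet (S : Set E) : MeasurableSet S := S.to_countable.measurableSet

lemma measCoord (n : ℕ) (S : Set E) : MeasurableSet {ω : ℕ → E | ω n ∈ S} :=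
  measurable_pi_apply n (measSet S)

lemma measShift (k : ℕ) : Measurable (fun ω : ℕ → E => fun n => ω (n + k)) :=
  measurable_pi_lambda _ (fun n => measurable_pi_apply (n + k))

lemma measRet (A B : Set E) : MeasurableSet {ω : ℕ → E | retT B ω < retT A ω} := by
  rw [retlt_eq]
  refine MeasurableSet.iUnion fun n => ?_
  by_cases hn : 0 < n
  · have : {ω : ℕ → E | 0 < n ∧ ω n ∈ B ∧ ∀ m, 0 < m → m ≤ n → ω m ∉ A}
        = {ω : ℕ → E | ω n ∈ B} ∩ ⋂ (m : ℕ) (_ : 0 < m) (_ : m ≤ n), {ω | ω m ∈ Aᶜ} := by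
      ext ω
      simp only [Set.mem_setOf_eq, Set.mem_inter_iff, Set.mem_iInter, Set.mem_compl_iff, hn, true_and]
    rw [this]
    exact (measCoord n B).inter (MeasurableSet.iInter fun m => MeasurableSet.iInter fun _ =>
      MeasurableSet.iInter fun _ => measCoord m Aᶜ)
  · have : {ω : ℕ → E | 0 < n ∧ ω n ∈ B ∧ ∀ m, 0 < m → m ≤ n → ω m ∉ A} = ∅ := by
      ext ω; simp [hn]
    rw [this]; exact MeasurableSet.empty

lemma measHit (A B : Set E) : MeasurableSet {ω : ℕ → E | hitT A ω < hitT B ω} := by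
  rw [hitlt_eq]
  refine MeasurableSet.iUnion fun n => ?_
  have : {ω : ℕ → E | ω n ∈ A ∧ ∀ m ≤ n, ω m ∉ B}
      = {ω : ℕ → E | ω n ∈ A} ∩ ⋂ (m : ℕ) (_ : m ≤ n), {ω | ω m ∈ Bᶜ} := by
    ext ω; simp [Set.mem_iInter]
  rw [this]
  exact (measCoord n A).inter (MeasurableSet.iInter fun m =>
    MeasurableSet.iInter fun _ => measCoord m Bᶜ)

variable (Pr : E → Measure (ℕ → E))

lemma inter_start (hprob : ∀ η, IsProbabilityMeasure (Pr η))
    (hstart : ∀ η, Pr η {ω | ω 0 = η} = 1) (η : E) (S : Set (ℕ → E)) :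
    Pr η S = Pr η (S ∩ {ω | ω 0 = η}) := by
  have := hprob η
  have hc : Pr η {ω : ℕ → E | ω 0 = η}ᶜ = 0 := by
    have hm : MeasurableSet {ω : ℕ → E | ω 0 = η} := by
      have := measCoord (E := E) 0 {η}
      simpa using this
    rw [measure_compl hm (measure_ne_top _ _), hstart η, measure_univ, tsub_self]
  refine le_antisymm ?_ (measure_mono Set.inter_subset_left)
  calc Pr η S ≤ Pr η ((S ∩ {ω | ω 0 = η}) ∪ {ω : ℕ → E | ω 0 = η}ᶜ) := by
        refine measure_mono fun ω hω => ?_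
        by_cases h0 : ω 0 = η
        · exact Or.inl ⟨hω, h0⟩
        · exact Or.inr h0
    _ ≤ Pr η (S ∩ {ω | ω 0 = η}) + Pr η {ω : ℕ → E | ω 0 = η}ᶜ := measure_union_le _ _
    _ = Pr η (S ∩ {ω | ω 0 = η}) := by rw [hc, add_zero]

lemma start_congr (hprob : ∀ η, IsProbabilityMeasure (Pr η))
    (hstart : ∀ η, Pr η {ω | ω 0 = η} = 1) (η : E) {S T : Set (ℕ → E)}
    (h : S ∩ {ω | ω 0 = η} = T ∩ {ω | ω 0 = η}) : Pr η S = Pr η T := by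
  rw [inter_start Pr hprob hstart η S, h, ← inter_start Pr hprob hstart η T]

variable (R : E → E → ℝ) (lam : E → ℝ)

lemma first_step
    (hMarkov : ∀ (η ξ : E) (C : Set (ℕ → E)), MeasurableSet C →
      Pr η {ω | ω 1 = ξ ∧ (fun n => ω (n + 1)) ∈ C}
        = ENNReal.ofReal (R η ξ / lam η) * Pr ξ C)
    (η : E) (C : Set (ℕ → E)) (hC : MeasurableSet C) :
    Pr η ((fun ω : ℕ → E => fun k => ω (k + 1)) ⁻¹' C)
      = ∑' ξ : E, ENNReal.ofReal (R η ξ / lam η) * Pr ξ C := by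
  have hdec : (fun ω : ℕ → E => fun k => ω (k + 1)) ⁻¹' C
      = ⋃ ξ : E, {ω : ℕ → E | ω 1 = ξ ∧ (fun n => ω (n + 1)) ∈ C} := by
    ext ω
    simp only [Set.mem_preimage, Set.mem_iUnion, Set.mem_setOf_eq]
    constructor
    · intro h; exact ⟨ω 1, rfl, h⟩
    · rintro ⟨ξ, -, h⟩; exact h
  rw [hdec, measure_iUnion ?_ ?_]
  · exact tsum_congr fun ξ => hMarkov η ξ C hC
  · intro ξ ξ' hne
    refine Set.disjoint_left.mpr ?_
    rintro ω ⟨h1, -⟩ ⟨h2, -⟩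
    exact hne (h1 ▸ h2)
  · intro ξ
    have h1 : MeasurableSet {ω : ℕ → E | ω 1 = ξ} := by
      have := measCoord (E := E) 1 {ξ}; simpa using this
    exact h1.inter ((measShift 1) hC)


def uSet (B : Set E) (n : ℕ) (ζ : E) : Set (ℕ → E) :=
  {ω | ω n = ζ ∧ ∀ m ≤ n, ω m ∉ B}

lemma measUSet (B : Set E) (n : ℕ) (ζ : E) : MeasurableSet (uSet B n ζ) := by
  have : uSet B n ζ = {ω : ℕ → E | ω n ∈ ({ζ} : Set E)}
      ∩ ⋂ (m : ℕ) (_ : m ≤ n), {ω : ℕ → E | ω m ∈ Bᶜ} := by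
    ext ω
    simp only [uSet, Set.mem_setOf_eq, Set.mem_inter_iff, Set.mem_iInter,
      Set.mem_singleton_iff, Set.mem_compl_iff]
  rw [this]
  exact (measCoord n {ζ}).inter (MeasurableSet.iInter fun m =>
    MeasurableSet.iInter fun _ => measCoord m Bᶜ)

variable (B : Set E)

lemma u_base (hprob : ∀ η, IsProbabilityMeasure (Pr η))
    (hstart : ∀ η, Pr η {ω | ω 0 = η} = 1) (η ζ : E) :
    Pr η (uSet B 0 ζ) = if η = ζ ∧ η ∉ B then 1 else 0 := by
  by_cases h : η = ζ ∧ η ∉ B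
  · rw [if_pos h, start_congr Pr hprob hstart η (T := {ω | ω 0 = η}) ?_, hstart η]
    ext ω
    simp only [uSet, Set.mem_inter_iff, Set.mem_setOf_eq, Nat.le_zero]
    constructor
    · rintro ⟨-, h0⟩; exact ⟨h0, h0⟩
    · rintro ⟨h0, -⟩
      exact ⟨⟨by rw [h0, h.1], fun m hm => by rw [hm, h0]; exact h.2⟩, h0⟩
  · rw [if_neg h, start_congr Pr hprob hstart η (T := (∅ : Set (ℕ → E))) ?_, measure_empty]
    ext ω
    simp only [uSet, Set.mem_inter_iff, Set.mem_setOf_eq, Nat.le_zero,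
      Set.mem_empty_iff_false, false_and, iff_false, not_and]
    rintro ⟨hζ, hnB⟩ h0
    exact h ⟨by rw [← h0, hζ], by rw [← h0]; exact hnB 0 rfl⟩

lemma u_rec (hprob : ∀ η, IsProbabilityMeasure (Pr η))
    (hstart : ∀ η, Pr η {ω | ω 0 = η} = 1)
    (hMarkov : ∀ (η ξ : E) (C : Set (ℕ → E)), MeasurableSet C →
      Pr η {ω | ω 1 = ξ ∧ (fun n => ω (n + 1)) ∈ C}
        = ENNReal.ofReal (R η ξ / lam η) * Pr ξ C) (n : ℕ) (η ζ : E) :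
    Pr η (uSet B (n + 1) ζ)
      = if η ∈ B then 0
        else ∑' ξ : E, ENNReal.ofReal (R η ξ / lam η) * Pr ξ (uSet B n ζ) := by
  by_cases hη : η ∈ B
  · rw [if_pos hη, start_congr Pr hprob hstart η (T := (∅ : Set (ℕ → E))) ?_, measure_empty]
    ext ω
    simp only [uSet, Set.mem_inter_iff, Set.mem_setOf_eq, Set.mem_empty_iff_false,
      false_and, iff_false, not_and]
    rintro ⟨-, hnB⟩ h0
    exact (hnB 0 (Nat.zero_le _)) (by rw [h0]; exact hη)
  · rw [if_neg hη,
      start_congr Pr hprob hstart η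
        (T := (fun ω : ℕ → E => fun k => ω (k + 1)) ⁻¹' uSet B n ζ) ?_,
      first_step Pr R lam hMarkov η _ (measUSet B n ζ)]
    ext ω
    simp only [uSet, Set.mem_inter_iff, Set.mem_setOf_eq, Set.mem_preimage]
    constructor
    · rintro ⟨⟨hζ, hnB⟩, h0⟩
      exact ⟨⟨hζ, fun m hm => hnB (m + 1) (Nat.succ_le_succ hm)⟩, h0⟩
    · rintro ⟨⟨hζ, hnB⟩, h0⟩
      refine ⟨⟨hζ, fun m hm => ?_⟩, h0⟩
      cases m with
      | zero => rw [h0]; exact hη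
      | succ k => exact hnB k (Nat.succ_le_succ_iff.mp hm)

lemma u_last (hprob : ∀ η, IsProbabilityMeasure (Pr η))
    (hstart : ∀ η, Pr η {ω | ω 0 = η} = 1)
    (hMarkov : ∀ (η ξ : E) (C : Set (ℕ → E)), MeasurableSet C →
      Pr η {ω | ω 1 = ξ ∧ (fun n => ω (n + 1)) ∈ C}
        = ENNReal.ofReal (R η ξ / lam η) * Pr ξ C) (n : ℕ) (η ζ : E) :
    Pr η (uSet B (n + 1) ζ)
      = if ζ ∈ B then 0
        else ∑' ξ : E, Pr η (uSet B n ξ) * ENNReal.ofReal (R ξ ζ / lam ξ) := by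
  induction n generalizing η ζ with
  | zero =>
    rw [u_rec Pr R lam B hprob hstart hMarkov 0 η ζ]
    by_cases hζ : ζ ∈ B
    · rw [if_pos hζ]
      by_cases hη : η ∈ B
      · rw [if_pos hη]
      · rw [if_neg hη]
        refine (tsum_eq_single ζ ?_).trans ?_
        · intro ξ hξ
          rw [u_base Pr B hprob hstart ξ ζ, if_neg (fun hc => hξ hc.1), mul_zero]
        · rw [u_base Pr B hprob hstart ζ ζ, if_neg (fun hc => hc.2 hζ), mul_zero]
    · rw [if_neg hζ]
      by_cases hη : η ∈ B
      · rw [if_pos hη]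
        symm
        refine (tsum_eq_single η ?_).trans ?_
        · intro ξ hξ
          rw [u_base Pr B hprob hstart η ξ, if_neg (fun hc => hξ hc.1.symm), zero_mul]
        · rw [u_base Pr B hprob hstart η η, if_neg (fun hc => hc.2 hη), zero_mul]
      · rw [if_neg hη]
        refine (tsum_eq_single ζ ?_).trans ?_
        · intro ξ hξ
          rw [u_base Pr B hprob hstart ξ ζ, if_neg (fun hc => hξ hc.1), mul_zero]
        rw [u_base Pr B hprob hstart ζ ζ, if_pos ⟨rfl, hζ⟩, mul_one]
        symm
        refine (tsum_eq_single η ?_).trans ?_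
        · intro ξ hξ
          rw [u_base Pr B hprob hstart η ξ, if_neg (fun hc => hξ hc.1.symm), zero_mul]
        · rw [u_base Pr B hprob hstart η η, if_pos ⟨rfl, hη⟩, one_mul]
  | succ n ih =>
    rw [u_rec Pr R lam B hprob hstart hMarkov (n + 1) η ζ]
    by_cases hη : η ∈ B
    · rw [if_pos hη]
      by_cases hζ : ζ ∈ B
      · rw [if_pos hζ]
      · rw [if_neg hζ]
        symm
        refine (tsum_congr fun ξ => ?_).trans tsum_zero
        rw [u_rec Pr R lam B hprob hstart hMarkov n η ξ, if_pos hη, zero_mul]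
    · rw [if_neg hη]
      by_cases hζ : ζ ∈ B
      · rw [if_pos hζ]
        refine (tsum_congr fun ξ => ?_).trans tsum_zero
        rw [ih ξ ζ, if_pos hζ, mul_zero]
      · rw [if_neg hζ]
        calc ∑' ξ : E, ENNReal.ofReal (R η ξ / lam η) * Pr ξ (uSet B (n + 1) ζ)
            = ∑' ξ : E, ∑' α : E, ENNReal.ofReal (R η ξ / lam η)
                * (Pr ξ (uSet B n α) * ENNReal.ofReal (R α ζ / lam α)) := by
              refine tsum_congr fun ξ => ?_
              rw [ih ξ ζ, if_neg hζ, ENNReal.tsum_mul_left]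
          _ = ∑' α : E, ∑' ξ : E, ENNReal.ofReal (R η ξ / lam η)
                * (Pr ξ (uSet B n α) * ENNReal.ofReal (R α ζ / lam α)) :=
              ENNReal.tsum_comm
          _ = ∑' α : E, (∑' ξ : E, ENNReal.ofReal (R η ξ / lam η) * Pr ξ (uSet B n α))
                * ENNReal.ofReal (R α ζ / lam α) := by
              refine tsum_congr fun α => ?_
              rw [← ENNReal.tsum_mul_right]
              exact tsum_congr fun ξ => by ring
          _ = ∑' α : E, Pr η (uSet B (n + 1) α) * ENNReal.ofReal (R α ζ / lam α) := by
              refine tsum_congr fun α => ?_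
              rw [u_rec Pr R lam B hprob hstart hMarkov n η α, if_neg hη]

variable (μ : E → ℝ)

lemma db (hrev : ∀ η ξ, μ η * R η ξ = μ ξ * R ξ η) (hlampos : ∀ η, 0 < lam η)
    (hμpos : ∀ η, 0 < μ η) (η ξ : E) :
    ENNReal.ofReal (lam η * μ η) * ENNReal.ofReal (R η ξ / lam η)
      = ENNReal.ofReal (lam ξ * μ ξ) * ENNReal.ofReal (R ξ η / lam ξ) := by
  rw [← ENNReal.ofReal_mul (mul_nonneg (hlampos η).le (hμpos η).le),
    ← ENNReal.ofReal_mul (mul_nonneg (hlampos ξ).le (hμpos ξ).le)]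
  congr 1
  have h1 : lam η ≠ 0 := (hlampos η).ne'
  have h2 : lam ξ ≠ 0 := (hlampos ξ).ne'
  have e1 : lam η * μ η * (R η ξ / lam η) = μ η * R η ξ := by field_simp
  have e2 : lam ξ * μ ξ * (R ξ η / lam ξ) = μ ξ * R ξ η := by field_simp
  rw [e1, e2, hrev]

lemma u_rev (hprob : ∀ η, IsProbabilityMeasure (Pr η))
    (hstart : ∀ η, Pr η {ω | ω 0 = η} = 1)
    (hMarkov : ∀ (η ξ : E) (C : Set (ℕ → E)), MeasurableSet C →
      Pr η {ω | ω 1 = ξ ∧ (fun n => ω (n + 1)) ∈ C}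
        = ENNReal.ofReal (R η ξ / lam η) * Pr ξ C)
    (hrev : ∀ η ξ, μ η * R η ξ = μ ξ * R ξ η) (hlampos : ∀ η, 0 < lam η)
    (hμpos : ∀ η, 0 < μ η) (n : ℕ) (η ζ : E) :
    ENNReal.ofReal (lam η * μ η) * Pr η (uSet B n ζ)
      = ENNReal.ofReal (lam ζ * μ ζ) * Pr ζ (uSet B n η) := by
  induction n generalizing η ζ with
  | zero =>
    rw [u_base Pr B hprob hstart η ζ, u_base Pr B hprob hstart ζ η]
    by_cases h : η = ζ
    · subst h; rfl
    · rw [if_neg (fun hc => h hc.1), if_neg (fun hc => h hc.1.symm), mul_zero, mul_zero]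
  | succ n ih =>
    rw [u_last Pr R lam B hprob hstart hMarkov n η ζ,
      u_rec Pr R lam B hprob hstart hMarkov n ζ η]
    by_cases hζ : ζ ∈ B
    · rw [if_pos hζ, if_pos hζ, mul_zero, mul_zero]
    · rw [if_neg hζ, if_neg hζ, ← ENNReal.tsum_mul_left, ← ENNReal.tsum_mul_left]
      refine tsum_congr fun ξ => ?_
      calc ENNReal.ofReal (lam η * μ η) * (Pr η (uSet B n ξ) * ENNReal.ofReal (R ξ ζ / lam ξ))
          = (ENNReal.ofReal (lam η * μ η) * Pr η (uSet B n ξ))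
              * ENNReal.ofReal (R ξ ζ / lam ξ) := by ring
        _ = (ENNReal.ofReal (lam ξ * μ ξ) * Pr ξ (uSet B n η))
              * ENNReal.ofReal (R ξ ζ / lam ξ) := by rw [ih η ξ]
        _ = (ENNReal.ofReal (lam ξ * μ ξ) * ENNReal.ofReal (R ξ ζ / lam ξ))
              * Pr ξ (uSet B n η) := by ring
        _ = (ENNReal.ofReal (lam ζ * μ ζ) * ENNReal.ofReal (R ζ ξ / lam ζ))
              * Pr ξ (uSet B n η) := by rw [db R lam μ hrev hlampos hμpos ξ ζ]
        _ = ENNReal.ofReal (lam ζ * μ ζ)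
              * (ENNReal.ofReal (R ζ ξ / lam ζ) * Pr ξ (uSet B n η)) := by ring

def DSet (A B : Set E) (n : ℕ) : Set (ℕ → E) :=
  {ω | ω n ∈ A ∧ (∀ m ≤ n, ω m ∉ B)
    ∧ retT B (fun k => ω (k + n)) < retT A (fun k => ω (k + n))}

lemma measDSet (A B : Set E) (n : ℕ) : MeasurableSet (DSet A B n) := by
  have : DSet A B n = ({ω : ℕ → E | ω n ∈ A}
      ∩ ⋂ (m : ℕ) (_ : m ≤ n), {ω : ℕ → E | ω m ∈ Bᶜ})
      ∩ (fun ω : ℕ → E => fun k => ω (k + n)) ⁻¹'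
          {ω : ℕ → E | retT B ω < retT A ω} := by
    ext ω
    simp only [DSet, Set.mem_setOf_eq, Set.mem_inter_iff, Set.mem_iInter,
      Set.mem_compl_iff, Set.mem_preimage]
    tauto
  rw [this]
  exact ((measCoord n A).inter (MeasurableSet.iInter fun m =>
      MeasurableSet.iInter fun _ => measCoord m Bᶜ)).inter
    ((measShift n) (measRet A B))

lemma d_base (hprob : ∀ η, IsProbabilityMeasure (Pr η))
    (hstart : ∀ η, Pr η {ω | ω 0 = η} = 1) (A : Set E) (hAB : Disjoint A B) (ζ : E) :
    Pr ζ (DSet A B 0)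
      = if ζ ∈ A then Pr ζ {ω | retT B ω < retT A ω} else 0 := by
  by_cases h : ζ ∈ A
  · rw [if_pos h,
      start_congr Pr hprob hstart ζ (T := {ω : ℕ → E | retT B ω < retT A ω}) ?_]
    ext ω
    simp only [DSet, Set.mem_inter_iff, Set.mem_setOf_eq, Nat.le_zero]
    constructor
    · rintro ⟨⟨-, -, hr⟩, h0⟩
      exact ⟨by simpa using hr, h0⟩
    · rintro ⟨hr, h0⟩
      refine ⟨⟨by rw [h0]; exact h, fun m hm => by
        rw [hm, h0]; exact fun hc => (hAB.le_bot ⟨h, hc⟩ : _), by simpa using hr⟩, h0⟩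
  · rw [if_neg h, start_congr Pr hprob hstart ζ (T := (∅ : Set (ℕ → E))) ?_, measure_empty]
    ext ω
    simp only [DSet, Set.mem_inter_iff, Set.mem_setOf_eq, Set.mem_empty_iff_false,
      false_and, iff_false, not_and]
    rintro ⟨hA0, -, -⟩ h0
    exact h (by rw [← h0]; exact hA0)

lemma d_rec (hprob : ∀ η, IsProbabilityMeasure (Pr η))
    (hstart : ∀ η, Pr η {ω | ω 0 = η} = 1)
    (hMarkov : ∀ (η ξ : E) (C : Set (ℕ → E)), MeasurableSet C →
      Pr η {ω | ω 1 = ξ ∧ (fun n => ω (n + 1)) ∈ C}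
        = ENNReal.ofReal (R η ξ / lam η) * Pr ξ C)
    (A : Set E) (n : ℕ) (ζ : E) :
    Pr ζ (DSet A B (n + 1))
      = if ζ ∈ B then 0
        else ∑' ξ : E, ENNReal.ofReal (R ζ ξ / lam ζ) * Pr ξ (DSet A B n) := by
  by_cases hζ : ζ ∈ B
  · rw [if_pos hζ, start_congr Pr hprob hstart ζ (T := (∅ : Set (ℕ → E))) ?_, measure_empty]
    ext ω
    simp only [DSet, Set.mem_inter_iff, Set.mem_setOf_eq, Set.mem_empty_iff_false,
      false_and, iff_false, not_and]
    rintro ⟨-, hnB, -⟩ h0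
    exact (hnB 0 (Nat.zero_le _)) (by rw [h0]; exact hζ)
  · rw [if_neg hζ,
      start_congr Pr hprob hstart ζ
        (T := (fun ω : ℕ → E => fun k => ω (k + 1)) ⁻¹' DSet A B n) ?_,
      first_step Pr R lam hMarkov ζ _ (measDSet A B n)]
    ext ω
    simp only [DSet, Set.mem_inter_iff, Set.mem_setOf_eq, Set.mem_preimage]
    constructor
    · rintro ⟨⟨hA1, hnB, hr⟩, h0⟩
      exact ⟨⟨hA1, fun m hm => hnB (m + 1) (Nat.succ_le_succ hm), hr⟩, h0⟩
    · rintro ⟨⟨hA1, hnB, hr⟩, h0⟩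
      refine ⟨⟨hA1, fun m hm => ?_, hr⟩, h0⟩
      cases m with
      | zero => rw [h0]; exact hζ
      | succ k => exact hnB k (Nat.succ_le_succ_iff.mp hm)

lemma d_formula (hprob : ∀ η, IsProbabilityMeasure (Pr η))
    (hstart : ∀ η, Pr η {ω | ω 0 = η} = 1)
    (hMarkov : ∀ (η ξ : E) (C : Set (ℕ → E)), MeasurableSet C →
      Pr η {ω | ω 1 = ξ ∧ (fun n => ω (n + 1)) ∈ C}
        = ENNReal.ofReal (R η ξ / lam η) * Pr ξ C)
    (A : Set E) (hAB : Disjoint A B) (n : ℕ) (ζ : E) :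
    Pr ζ (DSet A B n)
      = ∑' η : E, (if η ∈ A
          then Pr ζ (uSet B n η) * Pr η {ω | retT B ω < retT A ω} else 0) := by
  induction n generalizing ζ with
  | zero =>
    rw [d_base Pr B hprob hstart A hAB ζ]
    symm
    refine (tsum_eq_single ζ ?_).trans ?_
    · intro η hη
      by_cases hA' : η ∈ A
      · rw [if_pos hA', u_base Pr B hprob hstart ζ η, if_neg (fun hc => hη hc.1.symm), zero_mul]
      · rw [if_neg hA']
    · by_cases h : ζ ∈ A
      · rw [if_pos h, u_base Pr B hprob hstart ζ ζ,
          if_pos ⟨rfl, fun hc => (hAB.le_bot ⟨h, hc⟩ : _)⟩, one_mul, if_pos h]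
      · rw [if_neg h, if_neg h]
  | succ n ih =>
    rw [d_rec Pr R lam B hprob hstart hMarkov A n ζ]
    by_cases hζ : ζ ∈ B
    · rw [if_pos hζ]
      symm
      refine (tsum_congr fun η => ?_).trans tsum_zero
      rw [u_rec Pr R lam B hprob hstart hMarkov n ζ η, if_pos hζ, zero_mul, ite_self]
    · rw [if_neg hζ]
      calc ∑' ξ : E, ENNReal.ofReal (R ζ ξ / lam ζ) * Pr ξ (DSet A B n)
          = ∑' ξ : E, ∑' η : E, ENNReal.ofReal (R ζ ξ / lam ζ)
              * (if η ∈ A then Pr ξ (uSet B n η) * Pr η {ω | retT B ω < retT A ω} else 0) := by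
            refine tsum_congr fun ξ => ?_
            rw [ih ξ, ENNReal.tsum_mul_left]
        _ = ∑' η : E, ∑' ξ : E, ENNReal.ofReal (R ζ ξ / lam ζ)
              * (if η ∈ A then Pr ξ (uSet B n η) * Pr η {ω | retT B ω < retT A ω} else 0) :=
            ENNReal.tsum_comm
        _ = ∑' η : E, (if η ∈ A
              then Pr ζ (uSet B (n + 1) η) * Pr η {ω | retT B ω < retT A ω} else 0) := by
            refine tsum_congr fun η => ?_
            by_cases hη : η ∈ A
            · simp only [if_pos hη]
              rw [u_rec Pr R lam B hprob hstart hMarkov n ζ η, if_neg hζ,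
                ← ENNReal.tsum_mul_right]
              exact tsum_congr fun ξ => by ring
            · simp only [if_neg hη, mul_zero, tsum_zero]

lemma DSet_disj (A : Set E) : Pairwise (Function.onFun Disjoint (DSet A B)) := by
  have key : ∀ n n', n < n' → ∀ ω : ℕ → E, ω ∈ DSet A B n → ω ∈ DSet A B n' → False := by
    rintro n n' hlt ω ⟨hnA, hnB, hr⟩ ⟨hn'A, hn'B, -⟩
    have hAle : retT A (fun k => ω (k + n)) ≤ ((n' - n : ℕ) : ℕ∞) := by
      refine retT_le_of_mem (by omega) ?_
      show ω (n' - n + n) ∈ A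
      rwa [Nat.sub_add_cancel hlt.le]
    have := (hr.trans_le hAle).le
    obtain ⟨m, hm0, hmle, hmB⟩ := retT_le_iff.mp this
    exact hn'B (m + n) (by omega) hmB
  intro n n' hne
  rcases lt_or_gt_of_ne hne with h | h
  · exact Set.disjoint_left.mpr fun ω h1 h2 => key n n' h ω h1 h2
  · exact Set.disjoint_left.mpr fun ω h1 h2 => key n' n h ω h2 h1

lemma hit_eq_sum (hprob : ∀ η, IsProbabilityMeasure (Pr η))
    (hrec : ∀ η ξ, Pr η {ω | ∃ n, 0 < n ∧ ω n = ξ} = 1)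
    (A : Set E) (hAB : Disjoint A B) (hB : B.Nonempty) (ζ : E) :
    Pr ζ {ω | hitT A ω < hitT B ω} = ∑' n : ℕ, Pr ζ (DSet A B n) := by
  obtain ⟨b, hb⟩ := hB
  have := hprob ζ
  have hmb : MeasurableSet {ω : ℕ → E | ∃ n, 0 < n ∧ ω n = b} := by
    have : {ω : ℕ → E | ∃ n, 0 < n ∧ ω n = b}
        = ⋃ n : ℕ, ⋃ (_ : 0 < n), {ω : ℕ → E | ω n ∈ ({b} : Set E)} := by
      ext ω; simp [Set.mem_iUnion]
    rw [this]
    exact MeasurableSet.iUnion fun n => MeasurableSet.iUnion fun _ => measCoord n {b}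
  have hZ : Pr ζ {ω : ℕ → E | ∃ n, 0 < n ∧ ω n = b}ᶜ = 0 := by
    rw [measure_compl hmb (measure_ne_top _ _), hrec ζ b, measure_univ, tsub_self]
  have hDH : ∀ n, DSet A B n ⊆ {ω : ℕ → E | hitT A ω < hitT B ω} := by
    rintro n ω ⟨hnA, hnB, -⟩
    exact lt_of_le_of_lt (hitT_le_of_mem hnA) (lt_hitT_iff.mpr hnB)
  have hHD : {ω : ℕ → E | hitT A ω < hitT B ω}
      ⊆ (⋃ n, DSet A B n) ∪ {ω : ℕ → E | ∃ n, 0 < n ∧ ω n = b}ᶜ := by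
    intro ω hω
    by_cases hbhit : ∃ n, 0 < n ∧ ω n = b
    · left
      rw [hitlt_eq A B] at hω
      simp only [Set.mem_iUnion, Set.mem_setOf_eq] at hω ⊢
      obtain ⟨n0, hn0A, hn0B⟩ := hω
      have hex : ∃ k, ω k ∈ B := by
        obtain ⟨k, -, hk⟩ := hbhit
        exact ⟨k, by rw [hk]; exact hb⟩
      set k0 := Nat.find hex with hk0def
      have hk0B : ω k0 ∈ B := Nat.find_spec hex
      have hk0min : ∀ j, j < k0 → ω j ∉ B := fun j hj => Nat.find_min hex hj
      have hn0k0 : n0 < k0 := by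
        by_contra hc
        exact (hn0B k0 (not_lt.mp hc)) hk0B
      set P : ℕ → Prop := fun m => ω m ∈ A with hP
      set ns := Nat.findGreatest P (k0 - 1) with hns
      have hnsA : ω ns ∈ A := by
        have h' := Nat.findGreatest_spec (m := n0) (n := k0 - 1) (P := P)
          (by omega) hn0A
        rw [← hns] at h'
        exact h'
      have hnsle : ns ≤ k0 - 1 := Nat.findGreatest_le _
      refine ⟨ns, hnsA, fun m hm => hk0min m (by omega), ?_⟩
      have hc0 : 0 < k0 - ns := by omega
      have hretB : retT B (fun k => ω (k + ns)) ≤ ((k0 - ns : ℕ) : ℕ∞) := by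
        refine retT_le_of_mem hc0 ?_
        show ω (k0 - ns + ns) ∈ B
        rwa [Nat.sub_add_cancel (by omega)]
      have hretA : ((k0 - ns : ℕ) : ℕ∞) < retT A (fun k => ω (k + ns)) := by
        refine lt_retT_iff.mpr fun j hj0 hjle => ?_
        show ω (j + ns) ∉ A
        rcases eq_or_lt_of_le (show j + ns ≤ k0 by omega) with he | hlt'
        · rw [he]
          exact fun hc => (hAB.le_bot ⟨hc, hk0B⟩ : _)
        · exact Nat.findGreatest_is_greatest (P := P) (n := k0 - 1)
            (by rw [← hns]; omega) (by omega)
      exact lt_of_le_of_lt hretB hretA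
    · right; exact hbhit
  refine le_antisymm ?_ ?_
  · calc Pr ζ {ω : ℕ → E | hitT A ω < hitT B ω}
        ≤ Pr ζ ((⋃ n, DSet A B n) ∪ {ω : ℕ → E | ∃ n, 0 < n ∧ ω n = b}ᶜ) :=
          measure_mono hHD
      _ ≤ Pr ζ (⋃ n, DSet A B n) + Pr ζ {ω : ℕ → E | ∃ n, 0 < n ∧ ω n = b}ᶜ :=
          measure_union_le _ _
      _ = Pr ζ (⋃ n, DSet A B n) := by rw [hZ, add_zero]
      _ = ∑' n : ℕ, Pr ζ (DSet A B n) :=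
          measure_iUnion (DSet_disj B A) (fun n => measDSet A B n)
  · rw [← measure_iUnion (DSet_disj B A) (fun n => measDSet A B n)]
    exact measure_mono (Set.iUnion_subset hDH)

lemma hitB_set_eq (n : ℕ) :
    {ω : ℕ → E | (n : ℕ∞) < hitT B ω}
      = ⋂ (m : ℕ) (_ : m ≤ n), {ω : ℕ → E | ω m ∈ Bᶜ} := by
  ext ω
  simp only [Set.mem_setOf_eq, Set.mem_iInter, Set.mem_compl_iff, lt_hitT_iff]

lemma measHitB (n : ℕ) : MeasurableSet {ω : ℕ → E | (n : ℕ∞) < hitT B ω} := by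
  rw [hitB_set_eq]
  exact MeasurableSet.iInter fun m => MeasurableSet.iInter fun _ => measCoord m Bᶜ

lemma uSet_eq (n : ℕ) (ζ : E) :
    uSet B n ζ = {ω : ℕ → E | ω n = ζ} ∩ {ω : ℕ → E | (n : ℕ∞) < hitT B ω} := by
  ext ω
  simp only [uSet, Set.mem_setOf_eq, Set.mem_inter_iff, lt_hitT_iff]

lemma ite_meas (h : E → ℝ) (n : ℕ) :
    Measurable (fun ω : ℕ → E =>
      if (n : ℕ∞) < hitT B ω then ENNReal.ofReal (h (ω n) / lam (ω n)) else 0) := by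
  have heq : (fun ω : ℕ → E =>
      if (n : ℕ∞) < hitT B ω then ENNReal.ofReal (h (ω n) / lam (ω n)) else 0)
      = Set.indicator {ω : ℕ → E | (n : ℕ∞) < hitT B ω}
          (fun ω => ENNReal.ofReal (h (ω n) / lam (ω n))) := by
    ext ω
    rw [Set.indicator_apply]
    rfl
  rw [heq]
  exact Measurable.indicator
    ((measurable_of_countable (fun x : E => ENNReal.ofReal (h x / lam x))).comp
      (measurable_pi_apply n)) (measHitB B n)

lemma lint_formula (h : E → ℝ) (η : E) :
    ∫⁻ ω, (∑' n : ℕ, if (n : ℕ∞) < hitT B ω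
        then ENNReal.ofReal (h (ω n) / lam (ω n)) else 0) ∂Pr η
      = ∑' ζ : E, ENNReal.ofReal (h ζ / lam ζ) * ∑' n : ℕ, Pr η (uSet B n ζ) := by
  rw [lintegral_tsum (fun n => (ite_meas lam B h n).aemeasurable)]
  have hstep : ∀ n : ℕ,
      ∫⁻ ω, (if (n : ℕ∞) < hitT B ω
          then ENNReal.ofReal (h (ω n) / lam (ω n)) else 0) ∂Pr η
        = ∑' ζ : E, ENNReal.ofReal (h ζ / lam ζ) * Pr η (uSet B n ζ) := by
    intro n
    have hpt : ∀ ω : ℕ → E,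
        (if (n : ℕ∞) < hitT B ω then ENNReal.ofReal (h (ω n) / lam (ω n)) else 0)
          = ∑' ζ : E, Set.indicator (uSet B n ζ)
              (fun _ => ENNReal.ofReal (h ζ / lam ζ)) ω := by
      intro ω
      rw [tsum_eq_single (ω n) ?_]
      · rw [Set.indicator_apply]
        have : ω ∈ uSet B n (ω n) ↔ (n : ℕ∞) < hitT B ω := by
          simp only [uSet, Set.mem_setOf_eq, true_and, lt_hitT_iff]
        by_cases hc : (n : ℕ∞) < hitT B ω
        · rw [if_pos hc, if_pos (this.mpr hc)]
        · rw [if_neg hc, if_neg (fun hm => hc (this.mp hm))]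
      · intro ζ hζ
        exact Set.indicator_of_notMem (fun hc => hζ hc.1.symm) _
    calc ∫⁻ ω, (if (n : ℕ∞) < hitT B ω
            then ENNReal.ofReal (h (ω n) / lam (ω n)) else 0) ∂Pr η
        = ∫⁻ ω, (∑' ζ : E, Set.indicator (uSet B n ζ)
            (fun _ => ENNReal.ofReal (h ζ / lam ζ)) ω) ∂Pr η := lintegral_congr hpt
      _ = ∑' ζ : E, ∫⁻ ω, Set.indicator (uSet B n ζ)
            (fun _ => ENNReal.ofReal (h ζ / lam ζ)) ω ∂Pr η :=
          lintegral_tsum (fun ζ =>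
            (measurable_const.indicator (measUSet B n ζ)).aemeasurable)
      _ = ∑' ζ : E, ENNReal.ofReal (h ζ / lam ζ) * Pr η (uSet B n ζ) :=
          tsum_congr fun ζ => lintegral_indicator_const (measUSet B n ζ) _
  calc ∑' n : ℕ, ∫⁻ ω, (if (n : ℕ∞) < hitT B ω
          then ENNReal.ofReal (h (ω n) / lam (ω n)) else 0) ∂Pr η
      = ∑' n : ℕ, ∑' ζ : E, ENNReal.ofReal (h ζ / lam ζ) * Pr η (uSet B n ζ) :=
        tsum_congr hstep
    _ = ∑' ζ : E, ∑' n : ℕ, ENNReal.ofReal (h ζ / lam ζ) * Pr η (uSet B n ζ) :=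
        ENNReal.tsum_comm
    _ = ∑' ζ : E, ENNReal.ofReal (h ζ / lam ζ) * ∑' n : ℕ, Pr η (uSet B n ζ) :=
        tsum_congr fun ζ => ENNReal.tsum_mul_left

lemma integral_formula (hlampos : ∀ η, 0 < lam η) (g : E → ℝ) (η : E)
    (hfin : (∑' ζ : E, ENNReal.ofReal (|g ζ| / lam ζ)
        * ∑' n : ℕ, Pr η (uSet B n ζ)) ≠ ⊤) :
    ∫ ω, (∑' n : ℕ, if (n : ℕ∞) < hitT B ω then g (ω n) / lam (ω n) else 0) ∂Pr η
      = (∑' ζ : E, ENNReal.ofReal (max (g ζ) 0 / lam ζ)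
            * ∑' n : ℕ, Pr η (uSet B n ζ)).toReal
        - (∑' ζ : E, ENNReal.ofReal (max (-g ζ) 0 / lam ζ)
            * ∑' n : ℕ, Pr η (uSet B n ζ)).toReal := by
  have hgp_le : ∀ x : E, max (g x) 0 ≤ |g x| :=
    fun x => max_le (le_abs_self _) (abs_nonneg _)
  have hgm_le : ∀ x : E, max (-g x) 0 ≤ |g x| :=
    fun x => max_le (neg_le_abs _) (abs_nonneg _)
  set Sp : (ℕ → E) → ℝ≥0∞ := fun ω => ∑' n : ℕ,
    if (n : ℕ∞) < hitT B ω then ENNReal.ofReal (max (g (ω n)) 0 / lam (ω n)) else 0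
    with hSpdef
  set Sm : (ℕ → E) → ℝ≥0∞ := fun ω => ∑' n : ℕ,
    if (n : ℕ∞) < hitT B ω then ENNReal.ofReal (max (-g (ω n)) 0 / lam (ω n)) else 0
    with hSmdef
  set Sa : (ℕ → E) → ℝ≥0∞ := fun ω => ∑' n : ℕ,
    if (n : ℕ∞) < hitT B ω then ENNReal.ofReal (|g (ω n)| / lam (ω n)) else 0
    with hSadef
  have hmSp : Measurable Sp :=
    Measurable.ennreal_tsum (fun n => ite_meas lam B (fun x => max (g x) 0) n)
  have hmSm : Measurable Sm :=
    Measurable.ennreal_tsum (fun n => ite_meas lam B (fun x => max (-g x) 0) n)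
  have hmSa : Measurable Sa :=
    Measurable.ennreal_tsum (fun n => ite_meas lam B (fun x => |g x|) n)
  have hlSp : ∫⁻ ω, Sp ω ∂Pr η = ∑' ζ : E, ENNReal.ofReal (max (g ζ) 0 / lam ζ)
      * ∑' n : ℕ, Pr η (uSet B n ζ) := lint_formula Pr lam B (fun x => max (g x) 0) η
  have hlSm : ∫⁻ ω, Sm ω ∂Pr η = ∑' ζ : E, ENNReal.ofReal (max (-g ζ) 0 / lam ζ)
      * ∑' n : ℕ, Pr η (uSet B n ζ) := lint_formula Pr lam B (fun x => max (-g x) 0) η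
  have hlSa : ∫⁻ ω, Sa ω ∂Pr η = ∑' ζ : E, ENNReal.ofReal (|g ζ| / lam ζ)
      * ∑' n : ℕ, Pr η (uSet B n ζ) := lint_formula Pr lam B (fun x => |g x|) η
  have hfinp : ∫⁻ ω, Sp ω ∂Pr η ≠ ⊤ := by
    refine ne_top_of_le_ne_top hfin ?_
    rw [hlSp]
    refine ENNReal.tsum_le_tsum fun ζ => mul_le_mul_left ?_ _
    exact ENNReal.ofReal_le_ofReal ((div_le_div_iff_of_pos_right (hlampos ζ)).mpr (hgp_le ζ))
  have hfinm : ∫⁻ ω, Sm ω ∂Pr η ≠ ⊤ := by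
    refine ne_top_of_le_ne_top hfin ?_
    rw [hlSm]
    refine ENNReal.tsum_le_tsum fun ζ => mul_le_mul_left ?_ _
    exact ENNReal.ofReal_le_ofReal ((div_le_div_iff_of_pos_right (hlampos ζ)).mpr (hgm_le ζ))
  have hfina : ∫⁻ ω, Sa ω ∂Pr η ≠ ⊤ := by rw [hlSa]; exact hfin
  have hIp : Integrable (fun ω => (Sp ω).toReal) (Pr η) :=
    integrable_toReal_of_lintegral_ne_top hmSp.aemeasurable hfinp
  have hIm : Integrable (fun ω => (Sm ω).toReal) (Pr η) :=
    integrable_toReal_of_lintegral_ne_top hmSm.aemeasurable hfinm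
  have hae : ∀ᵐ ω ∂Pr η, Sa ω < ⊤ := ae_lt_top hmSa hfina
  have key : ∀ ω : ℕ → E, Sa ω < ⊤ →
      (∑' n : ℕ, if (n : ℕ∞) < hitT B ω then g (ω n) / lam (ω n) else 0)
        = (Sp ω).toReal - (Sm ω).toReal := by
    intro ω hω
    set a : ℕ → ℝ := fun n =>
      if (n : ℕ∞) < hitT B ω then g (ω n) / lam (ω n) else 0 with hadef
    set ap : ℕ → ℝ := fun n =>
      if (n : ℕ∞) < hitT B ω then max (g (ω n)) 0 / lam (ω n) else 0 with hapdef
    set am : ℕ → ℝ := fun n =>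
      if (n : ℕ∞) < hitT B ω then max (-g (ω n)) 0 / lam (ω n) else 0 with hamdef
    set ab : ℕ → ℝ := fun n =>
      if (n : ℕ∞) < hitT B ω then |g (ω n)| / lam (ω n) else 0 with habdef
    have hab_nonneg : ∀ n, 0 ≤ ab n := by
      intro n; simp only [habdef]
      split
      · exact div_nonneg (abs_nonneg _) (hlampos _).le
      · exact le_rfl
    have hap_nonneg : ∀ n, 0 ≤ ap n := by
      intro n; simp only [hapdef]
      split
      · exact div_nonneg (le_max_right _ _) (hlampos _).le
      · exact le_rfl
    have ham_nonneg : ∀ n, 0 ≤ am n := by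
      intro n; simp only [hamdef]
      split
      · exact div_nonneg (le_max_right _ _) (hlampos _).le
      · exact le_rfl
    have hap_le : ∀ n, ap n ≤ ab n := by
      intro n; simp only [hapdef, habdef]
      split
      · exact (div_le_div_iff_of_pos_right (hlampos _)).mpr (hgp_le _)
      · exact le_rfl
    have ham_le : ∀ n, am n ≤ ab n := by
      intro n; simp only [hamdef, habdef]
      split
      · exact (div_le_div_iff_of_pos_right (hlampos _)).mpr (hgm_le _)
      · exact le_rfl
    have hSa_eq : Sa ω = ∑' n : ℕ, ENNReal.ofReal (ab n) := by
      refine tsum_congr fun n => ?_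
      simp only [habdef]; split <;> simp
    have hsum_ab : Summable ab := by
      have h1 : (∑' n : ℕ, ENNReal.ofReal (ab n)) ≠ ⊤ := by
        rw [← hSa_eq]; exact hω.ne
      have h2 := ENNReal.summable_toReal h1
      exact (summable_congr fun n => by
        rw [ENNReal.toReal_ofReal (hab_nonneg n)]).mp h2
    have hsp : Summable ap := Summable.of_nonneg_of_le hap_nonneg hap_le hsum_ab
    have hsm : Summable am := Summable.of_nonneg_of_le ham_nonneg ham_le hsum_ab
    have hdiff : ∀ n, a n = ap n - am n := by
      intro n; simp only [hadef, hapdef, hamdef]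
      split
      · rw [div_sub_div_same, max_zero_sub_max_neg_zero_eq_self]
      · rw [sub_zero]
    have hSp_eq : (Sp ω).toReal = ∑' n : ℕ, ap n := by
      have h1 : Sp ω = ENNReal.ofReal (∑' n : ℕ, ap n) := by
        rw [ENNReal.ofReal_tsum_of_nonneg hap_nonneg hsp]
        refine tsum_congr fun n => ?_
        simp only [hapdef]; split <;> simp
      rw [h1, ENNReal.toReal_ofReal (tsum_nonneg hap_nonneg)]
    have hSm_eq : (Sm ω).toReal = ∑' n : ℕ, am n := by
      have h1 : Sm ω = ENNReal.ofReal (∑' n : ℕ, am n) := by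
        rw [ENNReal.ofReal_tsum_of_nonneg ham_nonneg hsm]
        refine tsum_congr fun n => ?_
        simp only [hamdef]; split <;> simp
      rw [h1, ENNReal.toReal_ofReal (tsum_nonneg ham_nonneg)]
    rw [hSp_eq, hSm_eq, ← Summable.tsum_sub hsp hsm]
    exact tsum_congr hdiff
  have hcongr : (fun ω => ∑' n : ℕ,
      if (n : ℕ∞) < hitT B ω then g (ω n) / lam (ω n) else 0)
        =ᵐ[Pr η] fun ω => (Sp ω).toReal - (Sm ω).toReal := by
    filter_upwards [hae] with ω hω
    exact key ω hω
  rw [integral_congr_ae hcongr, integral_sub hIp hIm,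
    integral_toReal hmSp.aemeasurable (ae_lt_top hmSp hfinp),
    integral_toReal hmSm.aemeasurable (ae_lt_top hmSm hfinm), hlSp, hlSm]

lemma key_identity (hprob : ∀ η, IsProbabilityMeasure (Pr η))
    (hstart : ∀ η, Pr η {ω | ω 0 = η} = 1)
    (hMarkov : ∀ (η ξ : E) (C : Set (ℕ → E)), MeasurableSet C →
      Pr η {ω | ω 1 = ξ ∧ (fun n => ω (n + 1)) ∈ C}
        = ENNReal.ofReal (R η ξ / lam η) * Pr ξ C)
    (hrec : ∀ η ξ, Pr η {ω | ∃ n, 0 < n ∧ ω n = ξ} = 1)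
    (A : Set E) (hAB : Disjoint A B) (hBne : B.Nonempty)
    (hrev : ∀ η ξ, μ η * R η ξ = μ ξ * R ξ η) (hlampos : ∀ η, 0 < lam η)
    (hμpos : ∀ η, 0 < μ η) (ζ : E) :
    (∑' η : E, if η ∈ A then ENNReal.ofReal (lam η * μ η)
        * Pr η {ω | retT B ω < retT A ω} * ∑' n : ℕ, Pr η (uSet B n ζ) else 0)
      = ENNReal.ofReal (lam ζ * μ ζ) * Pr ζ {ω | hitT A ω < hitT B ω} := by
  have h1 : ∀ η : E, (if η ∈ A then ENNReal.ofReal (lam η * μ η)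
      * Pr η {ω | retT B ω < retT A ω} * ∑' n : ℕ, Pr η (uSet B n ζ) else 0)
      = ∑' n : ℕ, (if η ∈ A then ENNReal.ofReal (lam η * μ η)
          * Pr η {ω | retT B ω < retT A ω} * Pr η (uSet B n ζ) else 0) := by
    intro η
    by_cases hη : η ∈ A
    · simp only [if_pos hη, ENNReal.tsum_mul_left]
    · simp only [if_neg hη, tsum_zero]
  rw [tsum_congr h1, ENNReal.tsum_comm]
  have h2 : ∀ n : ℕ, (∑' η : E, if η ∈ A then ENNReal.ofReal (lam η * μ η)
      * Pr η {ω | retT B ω < retT A ω} * Pr η (uSet B n ζ) else 0)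
      = ENNReal.ofReal (lam ζ * μ ζ) * Pr ζ (DSet A B n) := by
    intro n
    rw [d_formula Pr R lam B hprob hstart hMarkov A hAB n ζ, ← ENNReal.tsum_mul_left]
    refine tsum_congr fun η => ?_
    by_cases hη : η ∈ A
    · simp only [if_pos hη]
      calc ENNReal.ofReal (lam η * μ η) * Pr η {ω | retT B ω < retT A ω}
              * Pr η (uSet B n ζ)
          = (ENNReal.ofReal (lam η * μ η) * Pr η (uSet B n ζ))
              * Pr η {ω | retT B ω < retT A ω} := by ring
        _ = (ENNReal.ofReal (lam ζ * μ ζ) * Pr ζ (uSet B n η))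
              * Pr η {ω | retT B ω < retT A ω} := by
            rw [u_rev Pr R lam B μ hprob hstart hMarkov hrev hlampos hμpos n η ζ]
        _ = ENNReal.ofReal (lam ζ * μ ζ)
              * (Pr ζ (uSet B n η) * Pr η {ω | retT B ω < retT A ω}) := by ring
    · simp only [if_neg hη, mul_zero]
  rw [tsum_congr h2, ENNReal.tsum_mul_left,
    ← hit_eq_sum Pr B hprob hrec A hAB hBne ζ]

end S11

/-- For an irreducible positive recurrent chain reversible with respect to `μ`, with
`M = lam·μ` finite, disjoint `A`, `B` and the probability
`ν_{AB}(η) = M(η)P_η[T_B⁺ < T_A⁺]/Cap(A,B)` on `A`, one has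
`E_{ν_{AB}}[∫_0^{T_B} g(η_t) dt] = ⟨g, f_{AB}⟩_μ / Cap(A,B)` for every `μ`-integrable `g`.
The time integral of the continuous-time chain up to `T_B` is expressed through its jump
chain `ℙ` as `G(ω) = ∑_{n < t_B(ω)} g(ω_n)/lam(ω_n)` (the mean holding time at `ζ` being
`1/lam(ζ)`), and `f_{AB}(ζ) = P_ζ[T_A < T_B]`. -/
theorem stmt11 {E : Type*} [Countable E] [MeasurableSpace E] [MeasurableSingletonClass E]
    (R : E → E → ℝ) (lam μ g : E → ℝ) (ℙ : E → Measure (ℕ → E))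
    (A B : Set E) (cap : ℝ) (ν fAB : E → ℝ) (G : (ℕ → E) → ℝ)
    (hAB : Disjoint A B) (hA : A.Nonempty) (hB : B.Nonempty)
    (hRdiag : ∀ η, R η η = 0)
    (hR_nonneg : ∀ η ξ, 0 ≤ R η ξ)
    (hRsum : ∀ η, Summable (R η))
    (hlam : ∀ η, lam η = ∑' ξ, R η ξ)
    (hlampos : ∀ η, 0 < lam η)
    (hμpos : ∀ η, 0 < μ η)
    (hμprob : ∑' η, μ η = 1)
    (hμsummable : Summable μ)
    (hinv : ∀ ξ, ∑' η, (if η = ξ then 0 else μ η * R η ξ) = μ ξ * lam ξ)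
    (hrev : ∀ η ξ, μ η * R η ξ = μ ξ * R ξ η)
    (hMfin : Summable fun η => lam η * μ η)
    (hgint : Summable fun ζ => μ ζ * |g ζ|)
    (hprob : ∀ η, IsProbabilityMeasure (ℙ η))
    (hstart : ∀ η, ℙ η {ω | ω 0 = η} = 1)
    (hMarkov : ∀ (η ξ : E) (C : Set (ℕ → E)), MeasurableSet C →
      ℙ η {ω | ω 1 = ξ ∧ (fun n => ω (n + 1)) ∈ C}
        = ENNReal.ofReal (R η ξ / lam η) * ℙ ξ C)
    (hrec : ∀ η ξ, ℙ η {ω | ∃ n, 0 < n ∧ ω n = ξ} = 1)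
    (hcap : cap = ∑' η, Set.indicator A
      (fun η => lam η * μ η * (ℙ η {ω | retT B ω < retT A ω}).toReal) η)
    (hν : ∀ η, ν η = lam η * μ η * (ℙ η {ω | retT B ω < retT A ω}).toReal / cap)
    (hG : ∀ ω, G ω = ∑' n : ℕ,
      (if (n : ℕ∞) < hitT B ω then g (ω n) / lam (ω n) else 0))
    (hfAB : ∀ ζ, fAB ζ = (ℙ ζ {ω | hitT A ω < hitT B ω}).toReal) :
    ∑' η, Set.indicator A (fun η => ν η * ∫ ω, G ω ∂ℙ η) η
      = (∑' ζ, μ ζ * g ζ * fAB ζ) / cap := by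
  classical
  set Me : E → ℝ≥0∞ := fun η => ENNReal.ofReal (lam η * μ η) with hMe
  set rβ : E → ℝ≥0∞ := fun η => ℙ η {ω | retT B ω < retT A ω} with hrβ
  set f' : E → ℝ≥0∞ := fun ζ => ℙ ζ {ω | hitT A ω < hitT B ω} with hf'
  set N : E → E → ℝ≥0∞ := fun η ζ => ∑' n : ℕ, ℙ η (S11.uSet B n ζ) with hN
  set ca : E → ℝ≥0∞ := fun ζ => ENNReal.ofReal (|g ζ| / lam ζ) with hca
  set cp : E → ℝ≥0∞ := fun ζ => ENNReal.ofReal (max (g ζ) 0 / lam ζ) with hcp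
  set cm : E → ℝ≥0∞ := fun ζ => ENNReal.ofReal (max (-g ζ) 0 / lam ζ) with hcm
  have hMefin : ∀ η, Me η ≠ ⊤ := fun η => ENNReal.ofReal_ne_top
  have hlamμ_nonneg : ∀ η, 0 ≤ lam η * μ η :=
    fun η => mul_nonneg (hlampos η).le (hμpos η).le
  have hkey : ∀ ζ, (∑' η : E, if η ∈ A then Me η * rβ η * N η ζ else 0)
      = Me ζ * f' ζ := fun ζ =>
    S11.key_identity ℙ R lam B μ hprob hstart hMarkov hrec A hAB hB hrev
      hlampos hμpos ζ
  have hcp_le : ∀ ζ, cp ζ ≤ ca ζ := by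
    intro ζ
    exact ENNReal.ofReal_le_ofReal ((div_le_div_iff_of_pos_right (hlampos ζ)).mpr
      (max_le (le_abs_self _) (abs_nonneg _)))
  have hcm_le : ∀ ζ, cm ζ ≤ ca ζ := by
    intro ζ
    exact ENNReal.ofReal_le_ofReal ((div_le_div_iff_of_pos_right (hlampos ζ)).mpr
      (max_le (neg_le_abs _) (abs_nonneg _)))
  -- master finiteness
  have habs_bound : ∀ ζ, ca ζ * (Me ζ * f' ζ) ≤ ENNReal.ofReal (μ ζ * |g ζ|) := by
    intro ζ
    have h1 : f' ζ ≤ 1 := by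
      have := hprob ζ
      simpa [hf'] using prob_le_one (μ := ℙ ζ) (s := {ω | hitT A ω < hitT B ω})
    calc ca ζ * (Me ζ * f' ζ) ≤ ca ζ * (Me ζ * 1) :=
          mul_le_mul_right (mul_le_mul_right h1 _) _
      _ = ENNReal.ofReal (|g ζ| / lam ζ * (lam ζ * μ ζ)) := by
          rw [mul_one, hca, hMe, ← ENNReal.ofReal_mul
            (div_nonneg (abs_nonneg _) (hlampos ζ).le)]
      _ = ENNReal.ofReal (μ ζ * |g ζ|) := by
          congr 1
          have hlζ : lam ζ ≠ 0 := (hlampos ζ).ne'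
          field_simp
  have htot : (∑' ζ : E, ENNReal.ofReal (μ ζ * |g ζ|)) ≠ ⊤ := by
    rw [← ENNReal.ofReal_tsum_of_nonneg
      (fun ζ => mul_nonneg (hμpos ζ).le (abs_nonneg _)) hgint]
    exact ENNReal.ofReal_ne_top
  have hMaster : (∑' ζ : E, ca ζ * (Me ζ * f' ζ)) ≠ ⊤ :=
    ne_top_of_le_ne_top htot (ENNReal.tsum_le_tsum habs_bound)
  -- swap lemma
  have hswap : ∀ c : E → ℝ≥0∞,
      (∑' η : E, if η ∈ A then Me η * rβ η * (∑' ζ : E, c ζ * N η ζ) else 0)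
        = ∑' ζ : E, c ζ * (Me ζ * f' ζ) := by
    intro c
    calc (∑' η : E, if η ∈ A then Me η * rβ η * (∑' ζ : E, c ζ * N η ζ) else 0)
        = ∑' η : E, ∑' ζ : E,
            (if η ∈ A then c ζ * (Me η * rβ η * N η ζ) else 0) := by
          refine tsum_congr fun η => ?_
          by_cases hη : η ∈ A
          · simp only [if_pos hη]
            rw [← ENNReal.tsum_mul_left]
            exact tsum_congr fun ζ => by ring
          · simp only [if_neg hη, tsum_zero]
      _ = ∑' ζ : E, ∑' η : E,
            (if η ∈ A then c ζ * (Me η * rβ η * N η ζ) else 0) := ENNReal.tsum_comm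
      _ = ∑' ζ : E, c ζ * ∑' η : E,
            (if η ∈ A then Me η * rβ η * N η ζ else 0) := by
          refine tsum_congr fun ζ => ?_
          rw [← ENNReal.tsum_mul_left]
          refine tsum_congr fun η => ?_
          by_cases hη : η ∈ A
          · simp only [if_pos hη]
          · simp only [if_neg hη, mul_zero]
      _ = ∑' ζ : E, c ζ * (Me ζ * f' ζ) := tsum_congr fun ζ => by rw [hkey ζ]
  -- finiteness of the absolute sums per good η
  have hKabs_fin : ∀ η, η ∈ A → Me η * rβ η ≠ 0 →
      (∑' ζ : E, ca ζ * N η ζ) ≠ ⊤ := by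
    intro η hηA hw0
    intro hc
    apply hMaster
    rw [← hswap ca]
    refine ENNReal.tsum_eq_top_of_eq_top ?_
    refine ⟨η, ?_⟩
    rw [if_pos hηA, hc, ENNReal.mul_top hw0]
  -- integral formula for good η
  have hint : ∀ η, η ∈ A → Me η * rβ η ≠ 0 →
      ∫ ω, G ω ∂ℙ η = (∑' ζ : E, cp ζ * N η ζ).toReal
        - (∑' ζ : E, cm ζ * N η ζ).toReal := by
    intro η hηA hw
    have h1 : ∫ ω, G ω ∂ℙ η = ∫ ω, (∑' n : ℕ,
        if (n : ℕ∞) < hitT B ω then g (ω n) / lam (ω n) else 0) ∂ℙ η := by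
      exact integral_congr_ae (Filter.Eventually.of_forall (fun ω => hG ω))
    rw [h1]
    exact S11.integral_formula ℙ lam B hlampos g η (hKabs_fin η hηA hw)
  -- per-η term
  have hterm : ∀ η : E, Set.indicator A (fun η => ν η * ∫ ω, G ω ∂ℙ η) η
      = (if η ∈ A
          then ((Me η * rβ η) * ∑' ζ : E, cp ζ * N η ζ).toReal
            - ((Me η * rβ η) * ∑' ζ : E, cm ζ * N η ζ).toReal
          else 0) / cap := by
    intro η
    rw [Set.indicator_apply]
    by_cases hηA : η ∈ A
    · rw [if_pos hηA, if_pos hηA, hν η]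
      have hwtoReal : (Me η * rβ η).toReal = lam η * μ η * (rβ η).toReal := by
        rw [ENNReal.toReal_mul, hMe, ENNReal.toReal_ofReal (hlamμ_nonneg η)]
      by_cases hw : Me η * rβ η = 0
      · have h0 : lam η * μ η * (rβ η).toReal = 0 := by
          rw [← hwtoReal, hw, ENNReal.toReal_zero]
        rw [h0, hw]
        simp
      · have hfinp : (∑' ζ : E, cp ζ * N η ζ) ≠ ⊤ :=
          ne_top_of_le_ne_top (hKabs_fin η hηA hw)
            (ENNReal.tsum_le_tsum fun ζ => mul_le_mul_left (hcp_le ζ) _)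
        have hfinm : (∑' ζ : E, cm ζ * N η ζ) ≠ ⊤ :=
          ne_top_of_le_ne_top (hKabs_fin η hηA hw)
            (ENNReal.tsum_le_tsum fun ζ => mul_le_mul_left (hcm_le ζ) _)
        rw [hint η hηA hw]
        simp only [ENNReal.toReal_mul]
        have hMeT : (Me η).toReal = lam η * μ η := by
          rw [hMe]; exact ENNReal.toReal_ofReal (hlamμ_nonneg η)
        rw [hMeT]
        ring
    · rw [if_neg hηA, if_neg hηA, zero_div]
  rw [tsum_congr hterm, tsum_div_const]
  congr 1
  -- numerator equality
  have hIpA_fin : (∑' η : E, if η ∈ A then Me η * rβ η * (∑' ζ : E, cp ζ * N η ζ)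
      else 0) ≠ ⊤ := by
    rw [hswap cp]
    exact ne_top_of_le_ne_top hMaster
      (ENNReal.tsum_le_tsum fun ζ => mul_le_mul_left (hcp_le ζ) _)
  have hImA_fin : (∑' η : E, if η ∈ A then Me η * rβ η * (∑' ζ : E, cm ζ * N η ζ)
      else 0) ≠ ⊤ := by
    rw [hswap cm]
    exact ne_top_of_le_ne_top hMaster
      (ENNReal.tsum_le_tsum fun ζ => mul_le_mul_left (hcm_le ζ) _)
  have hterm2 : ∀ η : E, (if η ∈ A
      then ((Me η * rβ η) * ∑' ζ : E, cp ζ * N η ζ).toReal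
        - ((Me η * rβ η) * ∑' ζ : E, cm ζ * N η ζ).toReal
      else 0)
      = (if η ∈ A then Me η * rβ η * (∑' ζ : E, cp ζ * N η ζ) else 0).toReal
        - (if η ∈ A then Me η * rβ η * (∑' ζ : E, cm ζ * N η ζ) else 0).toReal := by
    intro η
    by_cases hη : η ∈ A
    · simp only [if_pos hη]
    · simp only [if_neg hη, ENNReal.toReal_zero, sub_zero]
  rw [tsum_congr hterm2,
    Summable.tsum_sub (ENNReal.summable_toReal hIpA_fin) (ENNReal.summable_toReal hImA_fin),
    ← ENNReal.tsum_toReal_eq (fun η => ne_top_of_le_ne_top hIpA_fin (ENNReal.le_tsum η)),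
    ← ENNReal.tsum_toReal_eq (fun η => ne_top_of_le_ne_top hImA_fin (ENNReal.le_tsum η)),
    hswap cp, hswap cm]
  -- final real computation
  have hfp : (∑' ζ : E, cp ζ * (Me ζ * f' ζ)) ≠ ⊤ :=
    ne_top_of_le_ne_top hMaster
      (ENNReal.tsum_le_tsum fun ζ => mul_le_mul_left (hcp_le ζ) _)
  have hfm : (∑' ζ : E, cm ζ * (Me ζ * f' ζ)) ≠ ⊤ :=
    ne_top_of_le_ne_top hMaster
      (ENNReal.tsum_le_tsum fun ζ => mul_le_mul_left (hcm_le ζ) _)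
  rw [ENNReal.tsum_toReal_eq (fun ζ => ne_top_of_le_ne_top hfp (ENNReal.le_tsum ζ)),
    ENNReal.tsum_toReal_eq (fun ζ => ne_top_of_le_ne_top hfm (ENNReal.le_tsum ζ)),
    ← Summable.tsum_sub
      (ENNReal.summable_toReal hfp)
      (ENNReal.summable_toReal hfm)]
  refine tsum_congr fun ζ => ?_
  have hf'fin : f' ζ ≠ ⊤ := measure_ne_top _ _
  rw [ENNReal.toReal_mul, ENNReal.toReal_mul, ENNReal.toReal_mul, ENNReal.toReal_mul,
    hcp, hcm, hMe,
    ENNReal.toReal_ofReal (div_nonneg (le_max_right _ _) (hlampos ζ).le),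
    ENNReal.toReal_ofReal (div_nonneg (le_max_right _ _) (hlampos ζ).le),
    ENNReal.toReal_ofReal (hlamμ_nonneg ζ), ← hfAB ζ]
  have hlζ : lam ζ ≠ 0 := (hlampos ζ).ne'
  have hmaxid : max (g ζ) 0 - max (-g ζ) 0 = g ζ := max_zero_sub_max_neg_zero_eq_self _
  field_simp
  linear_combination (μ ζ * fAB ζ) * hmaxid
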